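/- Let k ≥ 4 be an integer with 4 ∣ k. Then E*_{k,5}(i/√5) = (2·5^{k/2}/(5^{k/2}+1))·E_k(√5·i), E*_{k,5}(−1/2 + i/(2√5)) = (2·5^{k/2}/(5^{k/2}+1))·E_k(−1/2 + (√5/2)·i), and E*_{k,5}(−2/5 + i/5) = ((5^{k/2} + (2+i)^k)/(5^{k/2}+1))·E_k(i). -/

import Mathlib

open Complex

/-- The weight-`k` Eisenstein series for `SL₂(ℤ)`:
`E_k(z) = (1/2) ∑_{(c,d) coprime} (cz+d)^{-k}`. -/
noncomputable def Ek (k : ℕ) (z : ℂ) : ℂ :=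
  (1 / 2) * ∑' q : {q : ℤ × ℤ // Int.gcd q.1 q.2 = 1},
    (((q : ℤ × ℤ).1 : ℂ) * z + ((q : ℤ × ℤ).2 : ℂ)) ^ (-(k : ℤ))

/-- The Eisenstein series associated with the Fricke group `Γ₀*(p)`:
`E*_{k,p}(z) = (p^{k/2} E_k(pz) + E_k(z)) / (p^{k/2} + 1)`. -/
noncomputable def EkStar (k p : ℕ) (z : ℂ) : ℂ :=
  ((p : ℂ) ^ (k / 2) * Ek k ((p : ℂ) * z) + Ek k z) / ((p : ℂ) ^ (k / 2) + 1)

private lemma gcd_lin (a b c d x y : ℤ) (h : a * d - b * c = 1)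
    (hxy : Int.gcd x y = 1) : Int.gcd (x * a + y * c) (x * b + y * d) = 1 := by
  rw [← Int.isCoprime_iff_gcd_eq_one] at hxy ⊢
  obtain ⟨u, v, huv⟩ := hxy
  exact ⟨u * d - v * b, -(u * c) + v * a, by linear_combination (a*d - b*c) * huv + h⟩

private def mulEquiv (a b c d : ℤ) (h : a * d - b * c = 1) :
    {q : ℤ × ℤ // Int.gcd q.1 q.2 = 1} ≃ {q : ℤ × ℤ // Int.gcd q.1 q.2 = 1} where
  toFun q := ⟨(q.1.1 * a + q.1.2 * c, q.1.1 * b + q.1.2 * d),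
    gcd_lin a b c d q.1.1 q.1.2 h q.2⟩
  invFun q := ⟨(q.1.1 * d + q.1.2 * (-c), q.1.1 * (-b) + q.1.2 * a),
    gcd_lin d (-b) (-c) a q.1.1 q.1.2 (by linear_combination h) q.2⟩
  left_inv q := Subtype.ext (Prod.ext (by linear_combination q.1.1 * h)
    (by linear_combination q.1.2 * h))
  right_inv q := Subtype.ext (Prod.ext (by linear_combination q.1.1 * h)
    (by linear_combination q.1.2 * h))

private lemma Ek_transform (k : ℕ) (a b c d : ℤ) (h : a * d - b * c = 1)
    (z w : ℂ) (hz : (c : ℂ) * z + d ≠ 0)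
    (hw : ((c : ℂ) * z + d) * w = (a : ℂ) * z + b) :
    Ek k w = ((c : ℂ) * z + d) ^ k * Ek k z := by
  simp only [Ek]
  set e := mulEquiv a b c d h with he
  have key : ∀ q : {q : ℤ × ℤ // Int.gcd q.1 q.2 = 1},
      (((e q : ℤ × ℤ).1 : ℂ) * z + ((e q : ℤ × ℤ).2 : ℂ)) ^ (-(k : ℤ))
        = (((c : ℂ) * z + d) ^ k)⁻¹ *
          ((((q : ℤ × ℤ).1 : ℂ) * w + ((q : ℤ × ℤ).2 : ℂ)) ^ (-(k : ℤ))) := by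
    intro q
    have h1 : ((e q : ℤ × ℤ).1 : ℂ) * z + ((e q : ℤ × ℤ).2 : ℂ)
        = ((c : ℂ) * z + d) * ((((q : ℤ × ℤ).1 : ℂ)) * w + (((q : ℤ × ℤ).2 : ℂ))) := by
      simp only [he, mulEquiv, Equiv.coe_fn_mk]
      push_cast
      linear_combination (-((q : ℤ × ℤ).1 : ℂ)) * hw
    rw [h1, mul_zpow, zpow_neg, zpow_natCast]
  have hS : (∑' q : {q : ℤ × ℤ // Int.gcd q.1 q.2 = 1},
        (((q : ℤ × ℤ).1 : ℂ) * z + ((q : ℤ × ℤ).2 : ℂ)) ^ (-(k : ℤ)))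
      = (((c : ℂ) * z + d) ^ k)⁻¹ * ∑' q : {q : ℤ × ℤ // Int.gcd q.1 q.2 = 1},
        (((q : ℤ × ℤ).1 : ℂ) * w + ((q : ℤ × ℤ).2 : ℂ)) ^ (-(k : ℤ)) := by
    rw [← e.tsum_eq fun q : {q : ℤ × ℤ // Int.gcd q.1 q.2 = 1} =>
      (((q : ℤ × ℤ).1 : ℂ) * z + ((q : ℤ × ℤ).2 : ℂ)) ^ (-(k : ℤ))]
    rw [tsum_congr key, tsum_mul_left]
  have C_ne : ((c : ℂ) * z + d) ^ k ≠ 0 := pow_ne_zero _ hz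
  rw [hS]
  field_simp
  exact tsum_congr fun q => by ring

theorem stmt5 (k : ℕ) (hk : 4 ≤ k) (hk4 : 4 ∣ k) :
    EkStar k 5 (I / Real.sqrt 5) =
      (2 * (5 : ℂ) ^ (k / 2) / ((5 : ℂ) ^ (k / 2) + 1)) * Ek k ((Real.sqrt 5 : ℂ) * I) ∧
    EkStar k 5 (-1/2 + I / (2 * Real.sqrt 5)) =
      (2 * (5 : ℂ) ^ (k / 2) / ((5 : ℂ) ^ (k / 2) + 1)) *
        Ek k (-1/2 + ((Real.sqrt 5 : ℂ) / 2) * I) ∧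
    EkStar k 5 (-2/5 + I / 5) =
      (((5 : ℂ) ^ (k / 2) + (2 + I) ^ k) / ((5 : ℂ) ^ (k / 2) + 1)) * Ek k I := by
  set t : ℝ := Real.sqrt 5 with htdef
  have ht0 : (0:ℝ) < t := Real.sqrt_pos.mpr (by norm_num)
  have htne : (t : ℂ) ≠ 0 := by exact_mod_cast ne_of_gt ht0
  have ht2 : (t : ℂ) ^ 2 = 5 := by
    have : t ^ 2 = 5 := Real.sq_sqrt (by norm_num)
    exact_mod_cast this
  have hIk : I ^ k = 1 := by
    obtain ⟨m, rfl⟩ := hk4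
    rw [pow_mul]
    norm_num
  have h2k : k = 2 * (k / 2) := (Nat.mul_div_cancel' (dvd_trans ⟨2, rfl⟩ hk4)).symm
  have htk : ((t : ℂ) * I) ^ k = (5:ℂ) ^ (k / 2) := by
    rw [mul_pow, hIk, mul_one]
    calc (t:ℂ) ^ k = ((t:ℂ) ^ 2) ^ (k/2) := by rw [← pow_mul, ← h2k]
    _ = (5:ℂ) ^ (k/2) := by rw [ht2]
  have htIne : (t : ℂ) * I ≠ 0 := mul_ne_zero htne I_ne_zero
  have hD : (5:ℂ) ^ (k / 2) + 1 ≠ 0 := by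
    have h5 : ((5:ℝ) ^ (k/2) + 1 : ℝ) ≠ 0 := by positivity
    intro hc
    apply h5
    exact_mod_cast hc
  refine ⟨?_, ?_, ?_⟩
  · -- part 1
    have harg : (5 : ℂ) * (I / (t:ℂ)) = (t:ℂ) * I := by
      field_simp; linear_combination (-1) * ht2
    have hEz : Ek k (I / (t:ℂ)) = (5:ℂ) ^ (k/2) * Ek k ((t:ℂ) * I) := by
      have := Ek_transform k 0 (-1) 1 0 (by norm_num) ((t:ℂ) * I) (I / (t:ℂ))
        (by push_cast; simpa using htIne)
        (by push_cast; field_simp; linear_combination (t:ℂ) * I_sq)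
      rw [this]; push_cast; rw [← htk]; ring
    simp only [EkStar]
    push_cast
    rw [harg, hEz]
    field_simp
    ring
  · -- part 2
    set w : ℂ := -1/2 + ((t:ℂ) / 2) * I with hwdef
    have h21 : (2:ℂ) * w + 1 = (t:ℂ) * I := by rw [hwdef]; ring
    have hE5z : Ek k ((5:ℂ) * (-1/2 + I / (2 * (t:ℂ)))) = Ek k w := by
      have := Ek_transform k 1 (-2) 0 1 (by norm_num) w
        ((5:ℂ) * (-1/2 + I / (2 * (t:ℂ))))
        (by push_cast; norm_num)
        (by rw [hwdef]; push_cast; field_simp; linear_combination (-2*I) * ht2)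
      rw [this]; push_cast; norm_num
    have hEz : Ek k (-1/2 + I / (2 * (t:ℂ))) = (5:ℂ) ^ (k/2) * Ek k w := by
      have := Ek_transform k (-1) (-1) 2 1 (by norm_num) w
        (-1/2 + I / (2 * (t:ℂ)))
        (by push_cast; rw [h21]; exact htIne)
        (by rw [hwdef]; push_cast; field_simp; linear_combination (t:ℂ) * I_sq)
      rw [this]
      have hb : ((2:ℤ):ℂ) * w + ((1:ℤ):ℂ) = (t:ℂ) * I := by push_cast; exact h21
      rw [hb, htk]
    simp only [EkStar]
    push_cast
    rw [hE5z, hEz]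
    field_simp
    ring
  · -- part 3
    have hE5z : Ek k ((5:ℂ) * (-2/5 + I / 5)) = Ek k I := by
      have := Ek_transform k 1 (-2) 0 1 (by norm_num) I
        ((5:ℂ) * (-2/5 + I / 5))
        (by push_cast; norm_num)
        (by push_cast; ring)
      rw [this]; push_cast; norm_num
    have hEz : Ek k (-2/5 + I / 5) = (2 + I) ^ k * Ek k I := by
      have h2I : (1:ℂ) * I + 2 ≠ 0 := by
        simp only [one_mul]
        intro hc
        simpa using congrArg Complex.im hc
      have := Ek_transform k 0 (-1) 1 2 (by norm_num) I (-2/5 + I / 5)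
        (by push_cast; exact h2I)
        (by push_cast; linear_combination (1/5 : ℂ) * I_sq)
      rw [this]
      have hb : ((1:ℤ):ℂ) * I + ((2:ℤ):ℂ) = 2 + I := by push_cast; ring
      rw [hb]
    simp only [EkStar]
    push_cast
    rw [hE5z, hEz]
    field_simp
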